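/- For every n ≥ 0, ⟨DⁿUⁿ∅, ∅⟩ = n!, where ∅ is the empty partition, U and D are the up and down operators on Young's lattice, and ⟨·,·⟩ is the inner product making the partitions an orthonormal basis. -/

import Mathlib

/-- `YDCovers μ λ` means `μ ⋖ λ` in Young's lattice: `μ ⊆ λ` and `|λ| = |μ| + 1`. -/
def YDCovers (μ ν : YoungDiagram) : Prop :=
  μ.cells ⊆ ν.cells ∧ ν.cells.card = μ.cells.card + 1

lemma YD_row_lt_card {l : YoungDiagram} {i j : ℕ} (h : (i, j) ∈ l) :
    i < l.cells.card := by
  have hsub : (Finset.range (i + 1)).image (fun k => (k, j)) ⊆ l.cells := by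
    intro p hp
    simp only [Finset.mem_image, Finset.mem_range] at hp
    obtain ⟨k, hk, rfl⟩ := hp
    simpa [YoungDiagram.mem_cells] using
      l.up_left_mem (Nat.lt_succ_iff.mp hk) le_rfl h
  have hc := Finset.card_le_card hsub
  rwa [Finset.card_image_of_injective _ (fun a b hab => by
      simpa using congrArg Prod.fst hab), Finset.card_range] at hc

lemma YD_col_lt_card {l : YoungDiagram} {i j : ℕ} (h : (i, j) ∈ l) :
    j < l.cells.card := by
  have hsub : (Finset.range (j + 1)).image (fun k => (i, k)) ⊆ l.cells := by
    intro p hp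
    simp only [Finset.mem_image, Finset.mem_range] at hp
    obtain ⟨k, hk, rfl⟩ := hp
    simpa [YoungDiagram.mem_cells] using
      l.up_left_mem le_rfl (Nat.lt_succ_iff.mp hk) h
  have hc := Finset.card_le_card hsub
  rwa [Finset.card_image_of_injective _ (fun a b hab => by
      simpa using congrArg Prod.snd hab), Finset.card_range] at hc

lemma YD_finite_bounded (B : Finset (ℕ × ℕ)) :
    {l : YoungDiagram | l.cells ⊆ B}.Finite := by
  have himg : (YoungDiagram.cells '' {l : YoungDiagram | l.cells ⊆ B}).Finite := by
    refine Set.Finite.subset (B.powerset : Finset (Finset (ℕ × ℕ))).finite_toSet ?_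
    rintro s ⟨l, hl, rfl⟩
    simpa using hl
  refine Set.Finite.of_finite_image himg ?_
  intro a _ b _ hab
  cases a; cases b; simpa using hab

lemma YD_finite_down (l : YoungDiagram) : {m : YoungDiagram | YDCovers m l}.Finite :=
  (YD_finite_bounded l.cells).subset fun _ hm => hm.1

lemma YD_finite_up (l : YoungDiagram) : {n : YoungDiagram | YDCovers l n}.Finite := by
  refine (YD_finite_bounded
    (Finset.range (l.cells.card + 1) ×ˢ Finset.range (l.cells.card + 1))).subset ?_
  rintro n ⟨_, hcard⟩ c hc
  obtain ⟨i, j⟩ := c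
  have hmem : (i, j) ∈ n := by simpa [YoungDiagram.mem_cells] using hc
  have h1 : i < n.cells.card := YD_row_lt_card hmem
  have h2 : j < n.cells.card := YD_col_lt_card hmem
  simp only [Finset.mem_product, Finset.mem_range]
  omega

/-- The set 𝒰(λ) of diagrams covering `l`, as a `Finset`. -/
noncomputable def upFinset (l : YoungDiagram) : Finset YoungDiagram :=
  (YD_finite_up l).toFinset

/-- The set 𝒟(λ) of diagrams covered by `l`, as a `Finset`. -/
noncomputable def downFinset (l : YoungDiagram) : Finset YoungDiagram :=
  (YD_finite_down l).toFinset

/-- Standard Young tableaux of shape `l`, encoded as saturated chains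
`⊥ = T 0 ⋖ T 1 ⋖ ⋯ ⋖ T n = l` in Young's lattice. -/
def SYTset (l : YoungDiagram) : Set (ℕ → YoungDiagram) :=
  {T | T 0 = ⊥ ∧ (∀ i, i < l.cells.card → YDCovers (T i) (T (i + 1))) ∧
    ∀ i, l.cells.card ≤ i → T i = l}

/-- `fTab l` is the number of standard Young tableaux of shape `l`. -/
noncomputable def fTab (l : YoungDiagram) : ℕ := Nat.card (SYTset l)

/-- arm-length of a cell -/
def armLen (l : YoungDiagram) (c : ℕ × ℕ) : ℕ := l.rowLen c.1 - (c.2 + 1)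

/-- leg-length of a cell -/
def legLen (l : YoungDiagram) (c : ℕ × ℕ) : ℕ := l.colLen c.2 - (c.1 + 1)

/-- hook-length of a cell -/
def hookLen (l : YoungDiagram) (c : ℕ × ℕ) : ℕ := armLen l c + legLen l c + 1

/-- product of all hook-lengths of a diagram -/
def Hprod (l : YoungDiagram) : ℕ := ∏ c ∈ l.cells, hookLen l c

/-- For `r ⋖ k`, the unique box of `k / r`. -/
def diffBox (r k : YoungDiagram) : ℕ × ℕ := (k.cells \ r.cells).sup id

/-- Given the removed box `bm = λ/μ` and the added box `bn = ν/λ`, the unique cell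
`c_{μ,ν}` of `λ` in the row of one box and the column of the other. -/
def cellC (l : YoungDiagram) (bm bn : ℕ × ℕ) : ℕ × ℕ :=
  if (bm.1, bn.2) ∈ l.cells then (bm.1, bn.2) else (bn.1, bm.2)

/-- The field ℚ(q,t). -/
abbrev Kqt : Type := FractionRing (MvPolynomial (Fin 2) ℚ)

noncomputable def qq : Kqt := algebraMap (MvPolynomial (Fin 2) ℚ) Kqt (MvPolynomial.X 0)
noncomputable def tt : Kqt := algebraMap (MvPolynomial (Fin 2) ℚ) Kqt (MvPolynomial.X 1)

/-- `[h_κ(c)]^ℓ = 1 - q^{a} t^{ℓ+1}`. -/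
noncomputable def hkL (k : YoungDiagram) (c : ℕ × ℕ) : Kqt :=
  1 - qq ^ armLen k c * tt ^ (legLen k c + 1)

/-- `[h_κ(c)]^a = 1 - q^{a+1} t^{ℓ}`. -/
noncomputable def hkA (k : YoungDiagram) (c : ℕ × ℕ) : Kqt :=
  1 - qq ^ (armLen k c + 1) * tt ^ legLen k c

/-- `b_κ(c)`. -/
noncomputable def bqt (k : YoungDiagram) (c : ℕ × ℕ) : Kqt := hkL k c / hkA k c

/-- cells of `r` in the row of the box `k/r` (the set ℛ_{κ/ρ}). -/
def rowCells (r k : YoungDiagram) : Finset (ℕ × ℕ) :=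
  r.cells.filter (fun c => c.1 = (diffBox r k).1)

/-- cells of `r` in the column of the box `k/r` (the set 𝒞_{κ/ρ}). -/
def colCells (r k : YoungDiagram) : Finset (ℕ × ℕ) :=
  r.cells.filter (fun c => c.2 = (diffBox r k).2)

/-- `ψ_{κ/ρ}(q,t)` for a single-box skew shape `κ/ρ`. -/
noncomputable def psiE (r k : YoungDiagram) : Kqt :=
  ∏ c ∈ rowCells r k \ colCells r k, bqt r c / bqt k c

/-- `φ_{κ/ρ}(q,t)` for a single-box skew shape `κ/ρ`. -/
noncomputable def phiE (r k : YoungDiagram) : Kqt :=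
  bqt k (diffBox r k) * ∏ c ∈ colCells r k, bqt k c / bqt r c

/-- `α_{κ/ρ}`. -/
noncomputable def alphaE (r k : YoungDiagram) : Kqt :=
  (∏ c ∈ rowCells r k, hkL r c / hkL k c) * ∏ c ∈ colCells r k, hkA r c / hkA k c

/-- `ᾱ_{κ/ρ}`. -/
noncomputable def alphaBarE (r k : YoungDiagram) : Kqt :=
  (∏ c ∈ rowCells r k, hkA r c / hkA k c) * ∏ c ∈ colCells r k, hkL r c / hkL k c

/-- `η_{ν/λ/μ}` in terms of the removed box `bm = λ/μ` and the added box `bn = ν/λ`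
(rows and columns here are 0-indexed, so e.g. `r_ν - r_μ = bn.1 - bm.1`). -/
noncomputable def etaE (bm bn : ℕ × ℕ) : Kqt :=
  (1 - qq) * (1 - tt) /
    ((1 - qq ^ ((bm.2 : ℤ) - bn.2) * tt ^ ((bn.1 : ℤ) - bm.1)) *
     (1 - qq ^ ((bm.2 : ℤ) - bn.2 + 1) * tt ^ ((bn.1 : ℤ) - bm.1 - 1)))

/-- `𝒫_λ(λ → ν) = t^{r_ν - 1} α_{ν/λ}` (0-indexed: `r_ν - 1 = (diffBox l n).1`). -/
noncomputable def Ptop (l n : YoungDiagram) : Kqt :=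
  tt ^ (diffBox l n).1 * alphaE l n

/-- `𝒫_λ(μ → ν)` for `μ ∈ 𝒟(λ)`. -/
noncomputable def Pmove (l m n : YoungDiagram) : Kqt :=
  tt ^ (((diffBox l n).1 : ℤ) - (diffBox m l).1 - 1) * (alphaE l n / alphaE m l) *
    etaE (diffBox m l) (diffBox l n)

/-- `𝒫̄_λ(λ ← ν) = t^{r_ν - 1} ᾱ_{ν/λ}`. -/
noncomputable def PbarTop (l n : YoungDiagram) : Kqt :=
  tt ^ (diffBox l n).1 * alphaBarE l n

/-- `𝒫̄_λ(μ ← ν)` for `μ ∈ 𝒟(λ)`. -/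
noncomputable def PbarMove (l m n : YoungDiagram) : Kqt :=
  tt ^ (((diffBox l n).1 : ℤ) - (diffBox m l).1 - 1) * (alphaBarE l n / alphaBarE m l) *
    etaE (diffBox m l) (diffBox l n)

/-- `ψ_T(q,t)` for a standard tableau encoded as a chain of shapes. -/
noncomputable def psiT (n : ℕ) (T : ℕ → YoungDiagram) : Kqt :=
  ∏ i ∈ Finset.range n, psiE (T i) (T (i + 1))

/-- `φ_T(q,t)` for a standard tableau encoded as a chain of shapes. -/
noncomputable def phiT (n : ℕ) (T : ℕ → YoungDiagram) : Kqt :=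
  ∏ i ∈ Finset.range n, phiE (T i) (T (i + 1))

/-- The up operator `U` on ℚ𝕐. -/
noncomputable def Uop : Module.End ℚ (YoungDiagram →₀ ℚ) :=
  Finsupp.lsum ℚ fun l => LinearMap.toSpanSingleton ℚ _
    (∑ n ∈ upFinset l, Finsupp.single n (1 : ℚ))

/-- The down operator `D` on ℚ𝕐. -/
noncomputable def Dop : Module.End ℚ (YoungDiagram →₀ ℚ) :=
  Finsupp.lsum ℚ fun l => LinearMap.toSpanSingleton ℚ _
    (∑ m ∈ downFinset l, Finsupp.single m (1 : ℚ))

/-- The (q,t)-up operator `U_{q,t}`. -/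
noncomputable def Uqt : Module.End Kqt (YoungDiagram →₀ Kqt) :=
  Finsupp.lsum Kqt fun l => LinearMap.toSpanSingleton Kqt _
    (∑ n ∈ upFinset l, Finsupp.single n (psiE l n))

/-- The (q,t)-down operator `D_{q,t}`. -/
noncomputable def Dqt : Module.End Kqt (YoungDiagram →₀ Kqt) :=
  Finsupp.lsum Kqt fun l => LinearMap.toSpanSingleton Kqt _
    (∑ m ∈ downFinset l, Finsupp.single m (phiE m l))

open scoped Classical

lemma yd_ext {l m : YoungDiagram} (h : l.cells = m.cells) : l = m := YoungDiagram.ext h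

/-- row `r` is addable -/
def Addable (l : YoungDiagram) (r : ℕ) : Prop := r = 0 ∨ l.rowLen r < l.rowLen (r-1)

/-- row `r` is removable -/
def Removable (l : YoungDiagram) (r : ℕ) : Prop := l.rowLen (r+1) < l.rowLen r

lemma corner_not_mem (l : YoungDiagram) (r : ℕ) : (r, l.rowLen r) ∉ l.cells := by
  simp [YoungDiagram.mem_cells, YoungDiagram.mem_iff_lt_rowLen]

noncomputable def addCell (l : YoungDiagram) (r : ℕ) : YoungDiagram :=
  if h : Addable l r then
    { cells := insert (r, l.rowLen r) l.cells
      isLowerSet := by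
        rintro ⟨a, b⟩ ⟨i, j⟩ ⟨hi, hj⟩ hy
        simp only [Finset.coe_insert, Set.mem_insert_iff, Finset.mem_coe,
          YoungDiagram.mem_cells] at hy ⊢
        simp only at hi hj
        rcases hy with hy | hy
        · obtain ⟨ha, hb⟩ : a = r ∧ b = l.rowLen r := by simpa [Prod.ext_iff] using hy
          rw [ha] at hi
          rw [hb] at hj
          by_cases hj' : j < l.rowLen r
          · exact Or.inr (YoungDiagram.mem_iff_lt_rowLen.2
              (lt_of_lt_of_le hj' (l.rowLen_anti _ _ hi)))
          · have hjr : j = l.rowLen r := by omega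
            by_cases hir : i = r
            · exact Or.inl (by simp [hir, hjr])
            · rcases h with hr0 | h
              · omega
              · refine Or.inr (YoungDiagram.mem_iff_lt_rowLen.2 ?_)
                have := l.rowLen_anti i (r - 1) (by omega)
                omega
        · exact Or.inr (l.up_left_mem hi hj hy) }
  else l

noncomputable def removeCell (l : YoungDiagram) (r : ℕ) : YoungDiagram :=
  if h : Removable l r then
    { cells := l.cells.erase (r, l.rowLen r - 1)
      isLowerSet := by
        rintro ⟨a, b⟩ ⟨i, j⟩ ⟨hi, hj⟩ hy
        simp only [Finset.coe_erase, Set.mem_diff, Finset.mem_coe,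
          YoungDiagram.mem_cells, Set.mem_singleton_iff] at hy ⊢
        simp only at hi hj
        obtain ⟨hyl, hyne⟩ := hy
        refine ⟨l.up_left_mem hi hj hyl, ?_⟩
        rintro hc
        obtain ⟨hir, hjr⟩ : i = r ∧ j = l.rowLen r - 1 := by simpa [Prod.ext_iff] using hc
        rw [hir] at hi
        have hbr : b < l.rowLen a := YoungDiagram.mem_iff_lt_rowLen.1 hyl
        have h2 : l.rowLen (r + 1) < l.rowLen r := h
        by_cases hia : a = r
        · apply hyne
          rw [hia] at hbr ⊢
          simp only [Prod.mk.injEq, true_and]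
          omega
        · have h3 : l.rowLen a ≤ l.rowLen (r + 1) := l.rowLen_anti _ _ (by omega)
          omega }
  else l

lemma addCell_cells {l : YoungDiagram} {r : ℕ} (h : Addable l r) :
    (addCell l r).cells = insert (r, l.rowLen r) l.cells := by
  rw [addCell, dif_pos h]

lemma removeCell_cells {l : YoungDiagram} {r : ℕ} (h : Removable l r) :
    (removeCell l r).cells = l.cells.erase (r, l.rowLen r - 1) := by
  rw [removeCell, dif_pos h]

lemma corner_mem {l : YoungDiagram} {r : ℕ} (h : Removable l r) :
    (r, l.rowLen r - 1) ∈ l.cells := by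
  have h2 : 0 < l.rowLen r := lt_of_le_of_lt (Nat.zero_le _) h
  simp only [YoungDiagram.mem_cells, YoungDiagram.mem_iff_lt_rowLen]
  omega

lemma covers_addCell {l : YoungDiagram} {r : ℕ} (h : Addable l r) :
    YDCovers l (addCell l r) := by
  rw [YDCovers, addCell_cells h]
  refine ⟨Finset.subset_insert _ _, Finset.card_insert_of_notMem (corner_not_mem l r)⟩

lemma covers_removeCell {l : YoungDiagram} {r : ℕ} (h : Removable l r) :
    YDCovers (removeCell l r) l := by
  rw [YDCovers, removeCell_cells h]
  refine ⟨Finset.erase_subset _ _, ?_⟩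
  rw [Finset.card_erase_of_mem (corner_mem h)]
  have : 0 < l.cells.card := Finset.card_pos.2 ⟨_, corner_mem h⟩
  omega

lemma addCell_inj {l : YoungDiagram} {r r' : ℕ} (h : Addable l r) (h' : Addable l r')
    (heq : addCell l r = addCell l r') : r = r' := by
  have : (r, l.rowLen r) ∈ (addCell l r').cells := by
    rw [← heq, addCell_cells h]; exact Finset.mem_insert_self _ _
  rw [addCell_cells h'] at this
  rcases Finset.mem_insert.1 this with h1 | h1
  · exact congrArg Prod.fst h1
  · exact absurd h1 (corner_not_mem l r)

lemma removeCell_inj {l : YoungDiagram} {r r' : ℕ} (h : Removable l r) (h' : Removable l r')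
    (heq : removeCell l r = removeCell l r') : r = r' := by
  by_contra hne
  have h1 : (r, l.rowLen r - 1) ∉ (removeCell l r).cells := by
    rw [removeCell_cells h]; exact Finset.notMem_erase _ _
  apply h1
  rw [heq, removeCell_cells h', Finset.mem_erase]
  exact ⟨by simp [Prod.ext_iff, hne], corner_mem h⟩

lemma cover_cells {m l : YoungDiagram} (h : YDCovers m l) :
    ∃ c, c ∉ m.cells ∧ l.cells = insert c m.cells := by
  obtain ⟨hsub, hcard⟩ := h
  have h1 : (l.cells \ m.cells).card = 1 := by
    rw [Finset.card_sdiff_of_subset hsub]; omega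
  obtain ⟨c, hc⟩ := Finset.card_eq_one.1 h1
  refine ⟨c, ?_, ?_⟩
  · have : c ∈ l.cells \ m.cells := hc ▸ Finset.mem_singleton_self c
    exact (Finset.mem_sdiff.1 this).2
  · rw [Finset.insert_eq, ← hc, Finset.sdiff_union_self_eq_union,
      Finset.union_eq_left.2 hsub]

lemma cover_up {l n : YoungDiagram} (h : YDCovers l n) :
    ∃ r, Addable l r ∧ n = addCell l r := by
  obtain ⟨⟨r, j⟩, hc, hcells⟩ := cover_cells h
  have hmem : (r, j) ∈ n.cells := by rw [hcells]; exact Finset.mem_insert_self _ _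
  have hj1 : l.rowLen r ≤ j := by
    by_contra hlt
    exact hc (by simp [YoungDiagram.mem_cells, YoungDiagram.mem_iff_lt_rowLen]; omega)
  have hmem_of_ne : ∀ x : ℕ × ℕ, x ∈ n.cells → x ≠ (r, j) → x ∈ l.cells := by
    intro x hx hne
    rw [hcells] at hx
    rcases Finset.mem_insert.1 hx with h1 | h1
    · exact absurd h1 hne
    · exact h1
  have hj : j = l.rowLen r := by
    by_contra hne
    have hlt : l.rowLen r < j := by omega
    have : (r, l.rowLen r) ∈ l.cells := by
      apply hmem_of_ne _ (n.up_left_mem le_rfl (le_of_lt hlt) hmem)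
      simp [Prod.ext_iff]; omega
    exact corner_not_mem l r this
  subst hj
  have hadd : Addable l r := by
    rcases Nat.eq_zero_or_pos r with rfl | hr
    · exact Or.inl rfl
    · refine Or.inr ?_
      have : (r - 1, l.rowLen r) ∈ l.cells := by
        apply hmem_of_ne _ (n.up_left_mem (by omega) le_rfl hmem)
        simp [Prod.ext_iff]; omega
      exact YoungDiagram.mem_iff_lt_rowLen.1 this
  refine ⟨r, hadd, yd_ext ?_⟩
  rw [hcells, addCell_cells hadd]

lemma cover_down {m l : YoungDiagram} (h : YDCovers m l) :
    ∃ r, Removable l r ∧ m = removeCell l r := by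
  obtain ⟨⟨r, j⟩, hc, hcells⟩ := cover_cells h
  have hmem : (r, j) ∈ l.cells := by rw [hcells]; exact Finset.mem_insert_self _ _
  have hjlt : j < l.rowLen r := YoungDiagram.mem_iff_lt_rowLen.1 hmem
  have hmem_of_ne : ∀ x : ℕ × ℕ, x ∈ l.cells → x ≠ (r, j) → x ∈ m.cells := by
    intro x hx hne
    rw [hcells] at hx
    rcases Finset.mem_insert.1 hx with h1 | h1
    · exact absurd h1 hne
    · exact h1
  have hj : j = l.rowLen r - 1 := by
    by_contra hne
    have hlt : j + 1 < l.rowLen r := by omega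
    have h1 : (r, j + 1) ∈ m.cells := by
      apply hmem_of_ne _ (by simp [YoungDiagram.mem_cells, YoungDiagram.mem_iff_lt_rowLen]; omega)
      simp [Prod.ext_iff]
    have h2 : (r, j) ∈ m.cells := m.up_left_mem le_rfl (by omega) h1
    exact hc h2
  have hrem : Removable l r := by
    by_contra hnr
    have hge : l.rowLen r ≤ l.rowLen (r + 1) := by
      unfold Removable at hnr; omega
    have h1 : (r + 1, j) ∈ m.cells := by
      apply hmem_of_ne _ (by simp [YoungDiagram.mem_cells, YoungDiagram.mem_iff_lt_rowLen]; omega)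
      simp [Prod.ext_iff]
    have h2 : (r, j) ∈ m.cells := m.up_left_mem (by omega) le_rfl h1
    exact hc h2
  subst hj
  refine ⟨r, hrem, yd_ext ?_⟩
  rw [removeCell_cells hrem]
  ext x
  rw [Finset.mem_erase]
  constructor
  · intro hx
    refine ⟨fun hxe => hc (hxe ▸ hx), ?_⟩
    rw [hcells]; exact Finset.mem_insert_of_mem hx
  · rintro ⟨hne, hx⟩
    exact hmem_of_ne x hx hne

noncomputable def addSet (l : YoungDiagram) : Finset ℕ :=
  (Finset.range (l.colLen 0 + 1)).filter (Addable l)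

noncomputable def remSet (l : YoungDiagram) : Finset ℕ :=
  (Finset.range (l.colLen 0)).filter (Removable l)

lemma removable_lt {l : YoungDiagram} {r : ℕ} (h : Removable l r) : r < l.colLen 0 := by
  have h2 : 0 < l.rowLen r := lt_of_le_of_lt (Nat.zero_le _) h
  have : (r, 0) ∈ l := YoungDiagram.mem_iff_lt_rowLen.2 h2
  exact YoungDiagram.mem_iff_lt_colLen.1 this

lemma addable_lt {l : YoungDiagram} {r : ℕ} (h : Addable l r) : r < l.colLen 0 + 1 := by
  rcases h with rfl | h
  · omega
  · have h2 : 0 < l.rowLen (r - 1) := lt_of_le_of_lt (Nat.zero_le _) h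
    have : (r - 1, 0) ∈ l := YoungDiagram.mem_iff_lt_rowLen.2 h2
    have := YoungDiagram.mem_iff_lt_colLen.1 this
    omega

lemma mem_addSet {l : YoungDiagram} {r : ℕ} : r ∈ addSet l ↔ Addable l r := by
  simp only [addSet, Finset.mem_filter, Finset.mem_range]
  exact ⟨fun h => h.2, fun h => ⟨addable_lt h, h⟩⟩

lemma mem_remSet {l : YoungDiagram} {r : ℕ} : r ∈ remSet l ↔ Removable l r := by
  simp only [remSet, Finset.mem_filter, Finset.mem_range]
  exact ⟨fun h => h.2, fun h => ⟨removable_lt h, h⟩⟩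

lemma card_addSet (l : YoungDiagram) : (addSet l).card = (remSet l).card + 1 := by
  have h : addSet l = insert 0 ((remSet l).image Nat.succ) := by
    ext r
    rw [mem_addSet, Finset.mem_insert]
    constructor
    · intro h
      rcases Nat.eq_zero_or_pos r with rfl | hr
      · exact Or.inl rfl
      · refine Or.inr ?_
        rcases h with rfl | h
        · omega
        · refine Finset.mem_image.2 ⟨r - 1, mem_remSet.2 ?_, by omega⟩
          unfold Removable
          have : r - 1 + 1 = r := by omega
          rw [this]
          exact h
    · rintro (rfl | h)
      · exact Or.inl rfl
      · obtain ⟨s, hs, rfl⟩ := Finset.mem_image.1 h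
        refine Or.inr ?_
        have := mem_remSet.1 hs
        unfold Removable at this
        simpa using this
  rw [h, Finset.card_insert_of_notMem (by simp),
    Finset.card_image_of_injective _ Nat.succ_injective]

lemma mem_upFinset {l n : YoungDiagram} : n ∈ upFinset l ↔ YDCovers l n := by
  rw [upFinset, Set.Finite.mem_toFinset, Set.mem_setOf_eq]

lemma mem_downFinset {m l : YoungDiagram} : m ∈ downFinset l ↔ YDCovers m l := by
  rw [downFinset, Set.Finite.mem_toFinset, Set.mem_setOf_eq]

lemma card_upFinset (l : YoungDiagram) : (upFinset l).card = (addSet l).card :=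
  (Finset.card_bij (fun r (_ : r ∈ addSet l) => addCell l r)
    (fun r hr => mem_upFinset.2 (covers_addCell (mem_addSet.1 hr)))
    (fun r hr r' hr' h => addCell_inj (mem_addSet.1 hr) (mem_addSet.1 hr') h)
    (fun n hn => by
      obtain ⟨r, hr, hn2⟩ := cover_up (mem_upFinset.1 hn)
      exact ⟨r, mem_addSet.2 hr, hn2.symm⟩)).symm

lemma card_downFinset (l : YoungDiagram) : (downFinset l).card = (remSet l).card :=
  (Finset.card_bij (fun r (_ : r ∈ remSet l) => removeCell l r)
    (fun r hr => mem_downFinset.2 (covers_removeCell (mem_remSet.1 hr)))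
    (fun r hr r' hr' h => removeCell_inj (mem_remSet.1 hr) (mem_remSet.1 hr') h)
    (fun m hm => by
      obtain ⟨r, hr, hm2⟩ := cover_down (mem_downFinset.1 hm)
      exact ⟨r, mem_remSet.2 hr, hm2.symm⟩)).symm

lemma card_up_down (l : YoungDiagram) :
    (upFinset l).card = (downFinset l).card + 1 := by
  rw [card_upFinset, card_downFinset, card_addSet]

lemma count_eq (l κ : YoungDiagram) (hne : κ ≠ l) :
    ((upFinset l).filter (fun n => YDCovers κ n)).card
      = ((downFinset l).filter (fun m => YDCovers m κ)).card := by
  by_cases hcard : κ.cells.card = l.cells.card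
  · have hui := Finset.card_union_add_card_inter l.cells κ.cells
    by_cases hu : (l.cells ∪ κ.cells).card = l.cells.card + 1
    · have hicard : (l.cells ∩ κ.cells).card + 1 = l.cells.card := by omega
      have h1 : (upFinset l).filter (fun n => YDCovers κ n) = {l ⊔ κ} := by
        ext n
        simp only [Finset.mem_filter, Finset.mem_singleton, mem_upFinset]
        constructor
        · rintro ⟨⟨hl1, hl2⟩, ⟨hk1, hk2⟩⟩
          have hsub : l.cells ∪ κ.cells ⊆ n.cells := Finset.union_subset hl1 hk1
          have hcells : l.cells ∪ κ.cells = n.cells :=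
            Finset.eq_of_subset_of_card_le hsub (by omega)
          exact yd_ext (by rw [YoungDiagram.cells_sup, hcells])
        · rintro rfl
          rw [YDCovers, YDCovers, YoungDiagram.cells_sup]
          exact ⟨⟨Finset.subset_union_left, hu⟩, ⟨Finset.subset_union_right, by omega⟩⟩
      have h2 : (downFinset l).filter (fun m => YDCovers m κ) = {l ⊓ κ} := by
        ext m
        simp only [Finset.mem_filter, Finset.mem_singleton, mem_downFinset]
        constructor
        · rintro ⟨⟨hl1, hl2⟩, ⟨hk1, hk2⟩⟩
          have hsub : m.cells ⊆ l.cells ∩ κ.cells := Finset.subset_inter hl1 hk1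
          have hcells : m.cells = l.cells ∩ κ.cells :=
            Finset.eq_of_subset_of_card_le hsub (by omega)
          exact yd_ext (by rw [YoungDiagram.cells_inf, hcells])
        · rintro rfl
          rw [YDCovers, YDCovers, YoungDiagram.cells_inf]
          exact ⟨⟨Finset.inter_subset_left, by omega⟩,
            ⟨Finset.inter_subset_right, by omega⟩⟩
      rw [h1, h2, Finset.card_singleton, Finset.card_singleton]
    · have h1 : (upFinset l).filter (fun n => YDCovers κ n) = ∅ := by
        rw [Finset.eq_empty_iff_forall_notMem]
        rintro n hn
        simp only [Finset.mem_filter, mem_upFinset] at hn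
        obtain ⟨⟨hl1, hl2⟩, hk1, hk2⟩ := hn
        have hsub : l.cells ∪ κ.cells ⊆ n.cells := Finset.union_subset hl1 hk1
        have hss : l.cells ⊂ l.cells ∪ κ.cells := by
          refine ⟨Finset.subset_union_left, fun hsub2 => ?_⟩
          have : κ.cells = l.cells := Finset.eq_of_subset_of_card_le
            ((Finset.subset_union_right).trans hsub2) (by omega)
          exact hne (yd_ext this)
        have hlt := Finset.card_lt_card hss
        have := Finset.card_le_card hsub
        omega
      have h2 : (downFinset l).filter (fun m => YDCovers m κ) = ∅ := by
        rw [Finset.eq_empty_iff_forall_notMem]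
        rintro m hm
        simp only [Finset.mem_filter, mem_downFinset] at hm
        obtain ⟨⟨hl1, hl2⟩, hk1, hk2⟩ := hm
        have hsub : m.cells ⊆ l.cells ∩ κ.cells := Finset.subset_inter hl1 hk1
        have hss : l.cells ∩ κ.cells ⊂ l.cells := by
          refine ⟨Finset.inter_subset_left, fun hsub2 => ?_⟩
          have hlk : l.cells ⊆ κ.cells := fun x hx =>
            (Finset.mem_inter.1 (hsub2 hx)).2
          have : l.cells = κ.cells := Finset.eq_of_subset_of_card_le hlk (by omega)
          exact hne (yd_ext this.symm)
        have hlt := Finset.card_lt_card hss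
        have := Finset.card_le_card hsub
        omega
      rw [h1, h2]
  · have h1 : (upFinset l).filter (fun n => YDCovers κ n) = ∅ := by
      rw [Finset.eq_empty_iff_forall_notMem]
      rintro n hn
      simp only [Finset.mem_filter, mem_upFinset] at hn
      obtain ⟨⟨_, hl2⟩, _, hk2⟩ := hn
      omega
    have h2 : (downFinset l).filter (fun m => YDCovers m κ) = ∅ := by
      rw [Finset.eq_empty_iff_forall_notMem]
      rintro m hm
      simp only [Finset.mem_filter, mem_downFinset] at hm
      obtain ⟨⟨_, hl2⟩, _, hk2⟩ := hm
      omega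
    rw [h1, h2]

lemma Uop_single (l : YoungDiagram) :
    Uop (Finsupp.single l (1 : ℚ)) = ∑ n ∈ upFinset l, Finsupp.single n (1 : ℚ) := by
  rw [Uop, Finsupp.lsum_single, LinearMap.toSpanSingleton_apply, one_smul]

lemma Dop_single (l : YoungDiagram) :
    Dop (Finsupp.single l (1 : ℚ)) = ∑ m ∈ downFinset l, Finsupp.single m (1 : ℚ) := by
  rw [Dop, Finsupp.lsum_single, LinearMap.toSpanSingleton_apply, one_smul]

lemma coeff_sum_single (s : Finset YoungDiagram) (κ : YoungDiagram) :
    (∑ n ∈ s, Finsupp.single n (1 : ℚ)) κ = if κ ∈ s then 1 else 0 := by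
  rw [Finsupp.finset_sum_apply]
  simp [Finsupp.single_apply]

lemma DU_coeff (l κ : YoungDiagram) :
    ((Dop * Uop) (Finsupp.single l (1 : ℚ))) κ
      = (((upFinset l).filter (fun n => YDCovers κ n)).card : ℚ) := by
  rw [Module.End.mul_apply, Uop_single, map_sum, Finsupp.finset_sum_apply]
  have : ∀ n ∈ upFinset l, (Dop (Finsupp.single n (1 : ℚ))) κ
      = if YDCovers κ n then (1 : ℚ) else 0 := by
    intro n _
    rw [Dop_single, coeff_sum_single]
    simp [mem_downFinset]
  rw [Finset.sum_congr rfl this, Finset.sum_boole]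

lemma UD_coeff (l κ : YoungDiagram) :
    ((Uop * Dop) (Finsupp.single l (1 : ℚ))) κ
      = (((downFinset l).filter (fun m => YDCovers m κ)).card : ℚ) := by
  rw [Module.End.mul_apply, Dop_single, map_sum, Finsupp.finset_sum_apply]
  have : ∀ m ∈ downFinset l, (Uop (Finsupp.single m (1 : ℚ))) κ
      = if YDCovers m κ then (1 : ℚ) else 0 := by
    intro m _
    rw [Uop_single, coeff_sum_single]
    simp [mem_upFinset]
  rw [Finset.sum_congr rfl this, Finset.sum_boole]

lemma DU_eq_UD_add_one : Dop * Uop = Uop * Dop + 1 := by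
  refine Finsupp.lhom_ext' fun l => LinearMap.ext_ring ?_
  refine Finsupp.ext fun κ => ?_
  simp only [LinearMap.comp_apply, Finsupp.lsingle_apply, LinearMap.add_apply,
    Finsupp.add_apply, Module.End.one_apply]
  rw [DU_coeff, UD_coeff]
  by_cases hlk : κ = l
  · subst hlk
    have e1 : (upFinset κ).filter (fun n => YDCovers κ n) = upFinset κ :=
      Finset.filter_true_of_mem fun n hn => mem_upFinset.1 hn
    have e2 : (downFinset κ).filter (fun m => YDCovers m κ) = downFinset κ :=
      Finset.filter_true_of_mem fun m hm => mem_downFinset.1 hm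
    rw [e1, e2, card_up_down, Finsupp.single_eq_same]
    push_cast
    ring
  · rw [count_eq l κ hlk, Finsupp.single_eq_of_ne' fun h => hlk h.symm, add_zero]

lemma D_pow_U (n : ℕ) :
    Dop * Uop ^ (n + 1) = Uop ^ (n + 1) * Dop + (n + 1) • Uop ^ n := by
  induction n with
  | zero => simpa using DU_eq_UD_add_one
  | succ n ih =>
    have h0 : Dop * Uop ^ (n + 2) = (Dop * Uop ^ (n + 1)) * Uop := by
      rw [mul_assoc, ← pow_succ]
    rw [h0, ih, add_mul, smul_mul_assoc, ← pow_succ, mul_assoc, DU_eq_UD_add_one,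
      mul_add, mul_one, ← mul_assoc, ← pow_succ]
    rw [succ_nsmul (Uop ^ (n + 1)) (n + 1), add_comm ((n + 1) • Uop ^ (n + 1))]
    rw [← add_assoc]

lemma downFinset_bot : downFinset (⊥ : YoungDiagram) = ∅ := by
  rw [Finset.eq_empty_iff_forall_notMem]
  intro m hm
  have := (mem_downFinset.1 hm).2
  simp [YoungDiagram.cells_bot] at this

lemma Dop_bot : Dop (Finsupp.single (⊥ : YoungDiagram) (1 : ℚ)) = 0 := by
  rw [Dop_single, downFinset_bot, Finset.sum_empty]
/-- `⟨DⁿUⁿ∅, ∅⟩ = n!`. -/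
theorem down_up_pow_empty (n : ℕ) :
    ((Dop ^ n * Uop ^ n) (Finsupp.single (⊥ : YoungDiagram) (1 : ℚ)))
      (⊥ : YoungDiagram) = (Nat.factorial n : ℚ) := by
  induction n with
  | zero => simp [Nat.factorial]
  | succ n ih =>
    have h1 : Dop ^ (n + 1) * Uop ^ (n + 1) = Dop ^ n * (Dop * Uop ^ (n + 1)) := by
      rw [← mul_assoc, ← pow_succ]
    rw [h1, D_pow_U n, mul_add, LinearMap.add_apply, Finsupp.add_apply]
    have h2 : ((Dop ^ n * (Uop ^ (n + 1) * Dop))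
        (Finsupp.single (⊥ : YoungDiagram) (1 : ℚ))) = 0 := by
      rw [← mul_assoc, Module.End.mul_apply, Dop_bot, map_zero]
    have h3 : Dop ^ n * ((n + 1) • Uop ^ n) = (n + 1) • (Dop ^ n * Uop ^ n) :=
      mul_smul_comm _ _ _
    rw [h2, Finsupp.coe_zero, Pi.zero_apply, zero_add, h3, LinearMap.smul_apply,
      Finsupp.smul_apply, ih, nsmul_eq_mul, Nat.factorial_succ]
    push_cast
    ring
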